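/- Let (u,v) be an edge of the maximal matching M. In any execution of the algorithm MaxMatch, if u executes an assignment writing True into end_u in two distinct transitions, then v executes some rule in a transition lying strictly between these two transitions. -/

import Mathlib

open Classical

section MaxMatchPreamble

variable {V : Type*} [Fintype V] [LinearOrder V]

/-- Strict comparison on identifiers where `none` (null) counts as greater
than every identifier. -/
def optLT : Option V → Option V → Prop
  | some x, some y => x < y
  | some _, none => True
  | none, _ => False

/-- A configuration of the MaxMatch algorithm: the variables `p`, `α`, `β`
(`a`,`b` here) and the booleans `s`, `end` (`e` here) of every vertex. -/
structure MMConfig (V : Type*) where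
  p : V → Option V
  a : V → Option V
  b : V → Option V
  s : V → Bool
  e : V → Bool

/-- The local state of one vertex. -/
structure MMLocal (V : Type*) where
  p : Option V
  a : Option V
  b : Option V
  s : Bool
  e : Bool

/-- The local state of vertex `u` in configuration `C`. -/
def MMConfig.loc (C : MMConfig V) (u : V) : MMLocal V :=
  ⟨C.p u, C.a u, C.b u, C.s u, C.e u⟩

/-- `m` encodes a maximal matching of `G`: `m u = some v` iff `(u,v)` is a
matching edge, `m u = none` iff `u` is single. -/
structure MaxMatchingOn (G : SimpleGraph V) (m : V → Option V) : Prop where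
  adj : ∀ u v, m u = some v → G.Adj u v
  symm : ∀ u v, m u = some v → m v = some u
  maximal : ∀ u v, G.Adj u v → m u ≠ none ∨ m v ≠ none

/-- `Lowest(S)`: the minimum-identifier element of `S`, `none` if `S = ∅`. -/
noncomputable def lowestSet (S : Set V) : Option V :=
  if h : (Finset.univ.filter fun x => x ∈ S).Nonempty
  then some ((Finset.univ.filter fun x => x ∈ S).min' h) else none

/-- `Lowest` of a finite set of identifiers-or-null: `none` (null) elements are
greater than all identifiers, hence ignored. -/
noncomputable def lowestOpt (S : Finset (Option V)) : Option V :=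
  lowestSet {x : V | some x ∈ S}

/-- Truth value of a proposition. -/
noncomputable def pb (P : Prop) : Bool := if P then true else false

variable (G : SimpleGraph V) (m : V → Option V)

/-- The candidate set considered by `BestRematch(u)`. -/
def candSet (C : MMConfig V) (u : V) : Set V :=
  {x | G.Adj u x ∧ m x = none ∧ (C.p x = some u ∨ C.e x = false)}

/-- `BestRematch(u)`. -/
noncomputable def bestRematch (C : MMConfig V) (u : V) : Option V × Option V :=
  let a := lowestSet (candSet G m C u)
  (a, a.elim none fun w => lowestSet (candSet G m C u \ {w}))

/-- `AskFirst(u)`. -/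
noncomputable def askFirst (C : MMConfig V) (u : V) : Option V :=
  match m u with
  | none => none
  | some v =>
      if C.a u ≠ none ∧ C.a v ≠ none ∧
         2 ≤ ({C.a u, C.b u, C.a v, C.b v} : Finset (Option V)).card ∧
         (optLT (C.a u) (C.a v) ∨ (C.a u = C.a v ∧ C.b u = none) ∨
          (C.a u = C.a v ∧ C.b v ≠ none ∧ u < v))
      then C.a u else none

/-- `AskSecond(u)`. -/
noncomputable def askSecond (C : MMConfig V) (u : V) : Option V :=
  match m u with
  | none => none
  | some v =>
      if askFirst m C v ≠ none
      then lowestOpt (({C.a u, C.b u} : Finset (Option V)) \ {C.a v})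
      else none

/-- `Ask(u)`. -/
noncomputable def ask (C : MMConfig V) (u : V) : Option V :=
  if askFirst m C u = none then askSecond m C u else askFirst m C u

/-- Guard of rule `ResetEnd` (single vertices). -/
def guardResetEnd (C : MMConfig V) (x : V) : Prop :=
  C.p x = none ∧ C.e x = true

/-- Guard of rule `UpdateP` (single vertices). -/
def guardUpdateP (C : MMConfig V) (x : V) : Prop :=
  (C.p x = none ∧ ∃ w, G.Adj x w ∧ m w ≠ none ∧ C.p w = some x) ∨
  (∃ w, C.p x = some w ∧ ¬ (G.Adj x w ∧ m w ≠ none)) ∨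
  (∃ w, C.p x = some w ∧ C.p w ≠ some x)

/-- Guard of rule `UpdateEnd` (single vertices). -/
def guardUpdateEnd (C : MMConfig V) (x : V) : Prop :=
  ∃ w, C.p x = some w ∧ G.Adj x w ∧ m w ≠ none ∧ C.p w = some x ∧ C.e x ≠ C.e w

/-- `o ∈ single(N(u)) ∪ {null}`. -/
def inSNopt (u : V) (o : Option V) : Prop :=
  o = none ∨ ∃ w, o = some w ∧ G.Adj u w ∧ m w = none

/-- First part (first four disjuncts) of the guard of rule `Update`. -/
def guardUpdateA (C : MMConfig V) (u : V) : Prop :=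
  optLT (C.b u) (C.a u) ∨
  (¬ inSNopt G m u (C.a u) ∨ ¬ inSNopt G m u (C.b u)) ∨
  (C.a u = C.b u ∧ C.a u ≠ none) ∨
  ¬ inSNopt G m u (C.p u)

/-- Guard of rule `Update` (matched vertices). -/
def guardUpdate (C : MMConfig V) (u : V) : Prop :=
  guardUpdateA G m C u ∨
  ((C.a u, C.b u) ≠ bestRematch G m C u ∧
    (C.p u = none ∨ ∃ w, C.p u = some w ∧ C.p w ≠ some u ∧ C.e w = true))

/-- `p_{p_u} = u`. -/
def ppEq (C : MMConfig V) (u : V) : Prop :=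
  ∃ w, C.p u = some w ∧ C.p w = some u

/-- Value assigned to `s_u` by `MatchFirst` (`v = m_u`). -/
def mfS (C : MMConfig V) (u v : V) : Prop :=
  C.p u = askFirst m C u ∧ ppEq C u ∧ (C.p v = askSecond m C v ∨ C.p v = none)

/-- Value assigned to `end_u` by `MatchFirst` (`v = m_u`). -/
def mfE (C : MMConfig V) (u v : V) : Prop :=
  C.p u = askFirst m C u ∧ ppEq C u ∧ C.s u = true ∧
  C.p v = askSecond m C v ∧ C.e v = true

/-- Guard of rule `MatchFirst` (matched vertices). -/
def guardMatchFirst (C : MMConfig V) (u : V) : Prop :=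
  askFirst m C u ≠ none ∧ ∃ v, m u = some v ∧
    (C.p u ≠ askFirst m C u ∨ ¬ (C.s u = true ↔ mfS m C u v) ∨
     ¬ (C.e u = true ↔ mfE m C u v))

/-- Value assigned to `end_u` (and then `s_u`) by `MatchSecond` (`v = m_u`). -/
def msE (C : MMConfig V) (u v : V) : Prop :=
  C.p u = askSecond m C u ∧ ppEq C u ∧ C.p v = askFirst m C v

/-- Guard of rule `MatchSecond` (matched vertices). -/
def guardMatchSecond (C : MMConfig V) (u : V) : Prop :=
  askSecond m C u ≠ none ∧ ∃ v, m u = some v ∧ C.s v = true ∧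
    (C.p u ≠ askSecond m C u ∨ ¬ (C.e u = true ↔ msE m C u v) ∨ C.s u ≠ C.e u)

/-- Guard of rule `ResetMatch` (matched vertices). -/
def guardResetMatch (C : MMConfig V) (u : V) : Prop :=
  (askFirst m C u = none ∧ askSecond m C u = none ∧
    ¬ (C.p u = none ∧ C.s u = false ∧ C.e u = false)) ∨
  (askSecond m C u ≠ none ∧ C.p u ≠ none ∧ ∃ v, m u = some v ∧ C.s v = false)

/-- The local state of `u` after it atomically executes the command of its
highest-priority true-guard rule (its state is unchanged if no guard holds). -/
noncomputable def localNext (C : MMConfig V) (u : V) : MMLocal V :=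
  if m u = none then
    if guardResetEnd C u then ⟨C.p u, C.a u, C.b u, C.s u, false⟩
    else if guardUpdateP G m C u then
      ⟨lowestSet {w | G.Adj u w ∧ C.p w = some u}, C.a u, C.b u, C.s u, false⟩
    else if guardUpdateEnd G m C u then
      ⟨C.p u, C.a u, C.b u, C.s u, (C.p u).elim (C.e u) C.e⟩
    else C.loc u
  else
    if guardUpdate G m C u then
      ⟨none, (bestRematch G m C u).1, (bestRematch G m C u).2, false, false⟩
    else if guardMatchFirst m C u then
      ⟨askFirst m C u, C.a u, C.b u,
        pb (∃ v, m u = some v ∧ mfS m C u v),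
        pb (∃ v, m u = some v ∧ mfE m C u v)⟩
    else if guardMatchSecond m C u then
      ⟨askSecond m C u, C.a u, C.b u,
        pb (∃ v, m u = some v ∧ msE m C u v),
        pb (∃ v, m u = some v ∧ msE m C u v)⟩
    else if guardResetMatch m C u then ⟨none, C.a u, C.b u, false, false⟩
    else C.loc u

/-- `u` is activable (eligible for some rule) in `C`. -/
def Activable (C : MMConfig V) (u : V) : Prop :=
  (m u = none ∧ (guardResetEnd C u ∨ guardUpdateP G m C u ∨ guardUpdateEnd G m C u)) ∨
  (m u ≠ none ∧ (guardUpdate G m C u ∨ guardMatchFirst m C u ∨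
    guardMatchSecond m C u ∨ guardResetMatch m C u))

/-- A configuration is stable when no vertex is activable. -/
def Stable (C : MMConfig V) : Prop := ∀ u, ¬ Activable G m C u

/-- One transition of the adversarial distributed daemon: the nonempty set `A`
of activable vertices simultaneously execute their (highest-priority) rules. -/
def StepOn (C C' : MMConfig V) (A : Set V) : Prop :=
  A.Nonempty ∧ (∀ u ∈ A, Activable G m C u) ∧
  (∀ u ∈ A, C'.loc u = localNext G m C u) ∧
  (∀ u, u ∉ A → C'.loc u = C.loc u)

/-- A (maximal) execution, padded with stuttering once a stable configuration is
reached: at each index either a genuine transition occurs, or the configuration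
is stable and nothing moves.  `u ∈ act i` means `u` makes a move in transition
`i ↦ i+1`. -/
structure MMExecution (G : SimpleGraph V) (m : V → Option V) where
  cfg : ℕ → MMConfig V
  act : ℕ → Set V
  valid : ∀ i, StepOn G m (cfg i) (cfg (i+1)) (act i) ∨
    (act i = ∅ ∧ Stable G m (cfg i) ∧ cfg (i+1) = cfg i)

/-- μ: the number of matched vertices. -/
noncomputable def muV : ℕ := (Finset.univ.filter fun u : V => m u ≠ none).card

/-- σ: the number of single vertices. -/
noncomputable def sigmaV : ℕ := (Finset.univ.filter fun u : V => m u = none).card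

/-- The matching `M` as a relation. -/
def Mrel (a b : V) : Prop := m a = some b

/-- The output edge set `M⁺` of a configuration, as a relation. -/
def Mplus (C : MMConfig V) (a b : V) : Prop :=
  (m a = some b ∧ C.p a = none ∧ C.p b = none) ∨
  (G.Adj a b ∧ m a ≠ some b ∧ C.p a = some b ∧ C.p b = some a)

/-- `(x,u,v,y)` is a 3-augmenting path on `(G, M')`. -/
def IsAug3 (M' : V → V → Prop) (x u v y : V) : Prop :=
  x ≠ u ∧ x ≠ v ∧ x ≠ y ∧ u ≠ v ∧ u ≠ y ∧ v ≠ y ∧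
  G.Adj x u ∧ G.Adj u v ∧ G.Adj v y ∧
  M' u v ∧ ¬ M' x u ∧ ¬ M' v y

end MaxMatchPreamble

section MaxMatchHelpers
set_option linter.unusedSectionVars false

variable {V : Type*} [Fintype V] [LinearOrder V]

lemma pb_true {P : Prop} : pb P = true ↔ P := by simp [pb]

lemma optLT_asymm {a b : Option V} (h : optLT a b) (h' : optLT b a) : False := by
  cases a <;> cases b <;> simp [optLT] at h h'
  exact absurd h' (not_lt.mpr h.le)

lemma optLT_ne {a b : Option V} (h : optLT a b) : a ≠ b := by
  rintro rfl
  cases a <;> simp [optLT] at h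

lemma lowestSet_mem {S : Set V} {y : V} (h : lowestSet S = some y) : y ∈ S := by
  unfold lowestSet at h
  split at h
  · rename_i hne
    have hmem := Finset.min'_mem _ hne
    have : y ∈ Finset.univ.filter fun x => x ∈ S := by
      rwa [Option.some_inj.mp h] at hmem
    simpa using (Finset.mem_filter.mp this).2
  · simp at h

lemma lowestOpt_mem {S : Finset (Option V)} {y : V} (h : lowestOpt S = some y) :
    some y ∈ S := by
  unfold lowestOpt at h
  have := lowestSet_mem (V := V) (S := {x : V | some x ∈ S}) h
  exact this

lemma askFirst_eq {m : V → Option V} {C : MMConfig V} {u v : V} (h : m u = some v) :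
    askFirst m C u = if (C.a u ≠ none ∧ C.a v ≠ none ∧
      2 ≤ ({C.a u, C.b u, C.a v, C.b v} : Finset (Option V)).card ∧
      (optLT (C.a u) (C.a v) ∨ (C.a u = C.a v ∧ C.b u = none) ∨
       (C.a u = C.a v ∧ C.b v ≠ none ∧ u < v)))
    then C.a u else none := by
  unfold askFirst
  rw [h]

lemma askSecond_eq {m : V → Option V} {C : MMConfig V} {u v : V} (h : m u = some v) :
    askSecond m C u = if askFirst m C v ≠ none
      then lowestOpt (({C.a u, C.b u} : Finset (Option V)) \ {C.a v}) else none := by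
  unfold askSecond
  rw [h]

lemma askFirst_spec {m : V → Option V} {C : MMConfig V} {u v : V} (h : m u = some v)
    (hne : askFirst m C u ≠ none) :
    askFirst m C u = C.a u ∧ C.a u ≠ none ∧ C.a v ≠ none ∧
      (optLT (C.a u) (C.a v) ∨ (C.a u = C.a v ∧ C.b u = none) ∨
       (C.a u = C.a v ∧ C.b v ≠ none ∧ u < v)) := by
  rw [askFirst_eq h] at hne ⊢
  by_cases hc : (C.a u ≠ none ∧ C.a v ≠ none ∧
      2 ≤ ({C.a u, C.b u, C.a v, C.b v} : Finset (Option V)).card ∧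
      (optLT (C.a u) (C.a v) ∨ (C.a u = C.a v ∧ C.b u = none) ∨
       (C.a u = C.a v ∧ C.b v ≠ none ∧ u < v)))
  · rw [if_pos hc]
    exact ⟨rfl, hc.1, hc.2.1, hc.2.2.2⟩
  · rw [if_neg hc] at hne
    exact absurd rfl hne

/-- Key local fact: `askFirst(u)` and `askSecond(u)` cannot both be non-null. -/
lemma askSecond_eq_none {m : V → Option V} {C : MMConfig V} {u v : V}
    (huv : m u = some v) (hvu : m v = some u)
    (h1 : askFirst m C u ≠ none) : askSecond m C u = none := by
  rw [askSecond_eq huv]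
  by_cases hFv : askFirst m C v ≠ none
  · rw [if_pos hFv]
    by_contra hne
    obtain ⟨y, hy⟩ := Option.ne_none_iff_exists'.mp hne
    have hymem := lowestOpt_mem hy
    rw [Finset.mem_sdiff, Finset.mem_insert, Finset.mem_singleton, Finset.mem_singleton] at hymem
    obtain ⟨hau, -, -, hDu⟩ := askFirst_spec huv h1
    obtain ⟨hav, -, -, hDv⟩ := askFirst_spec hvu hFv
    rcases hDu with hlt | ⟨heq, hbu⟩ | ⟨heq, hbv, hltuv⟩
    · rcases hDv with hlt' | ⟨heq', _⟩ | ⟨heq', _, _⟩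
      · exact optLT_asymm hlt hlt'
      · exact optLT_ne hlt heq'.symm
      · exact optLT_ne hlt heq'.symm
    · rcases hDv with hlt' | ⟨heq', hbv⟩ | ⟨heq', hbu', _⟩
      · rw [heq] at hlt'; exact optLT_ne hlt' rfl
      · obtain ⟨hin, hout⟩ := hymem
        rw [hbu] at hin
        rcases hin with h | h
        · exact hout (h.trans heq)
        · simp at h
      · exact hbu' hbu
    · rcases hDv with hlt' | ⟨heq', hbv'⟩ | ⟨heq', hbu', hltvu⟩
      · rw [heq] at hlt'; exact optLT_ne hlt' rfl
      · exact hbv hbv'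
      · exact absurd hltvu (not_lt.mpr hltuv.le)
  · rw [if_neg hFv]

lemma askFirst_congr {m : V → Option V} {C D : MMConfig V} {u v : V} (h : m u = some v)
    (h1 : C.a u = D.a u) (h2 : C.b u = D.b u) (h3 : C.a v = D.a v) (h4 : C.b v = D.b v) :
    askFirst m C u = askFirst m D u := by
  rw [askFirst_eq h, askFirst_eq h, h1, h2, h3, h4]

lemma askSecond_congr {m : V → Option V} {C D : MMConfig V} {u v : V}
    (huv : m u = some v) (hvu : m v = some u)
    (h1 : C.a u = D.a u) (h2 : C.b u = D.b u) (h3 : C.a v = D.a v) (h4 : C.b v = D.b v) :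
    askSecond m C u = askSecond m D u := by
  rw [askSecond_eq huv, askSecond_eq huv, askFirst_congr hvu h3 h4 h1 h2, h1, h2, h3]

lemma guardUpdateA_congr {G : SimpleGraph V} {m : V → Option V} {C D : MMConfig V} {u : V}
    (h1 : C.a u = D.a u) (h2 : C.b u = D.b u) (h3 : C.p u = D.p u) :
    guardUpdateA G m C u ↔ guardUpdateA G m D u := by
  unfold guardUpdateA
  rw [h1, h2, h3]

lemma mfE_mfS {m : V → Option V} {C : MMConfig V} {u v : V} (h : mfE m C u v) :
    mfS m C u v := ⟨h.1, h.2.1, Or.inl h.2.2.2.1⟩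

lemma localNext_MF {G : SimpleGraph V} {m : V → Option V} {C : MMConfig V} {u : V}
    (hmu : m u ≠ none) (hU : ¬ guardUpdate G m C u) (hMF : guardMatchFirst m C u) :
    localNext G m C u = ⟨askFirst m C u, C.a u, C.b u,
      pb (∃ v, m u = some v ∧ mfS m C u v), pb (∃ v, m u = some v ∧ mfE m C u v)⟩ := by
  unfold localNext
  rw [if_neg hmu, if_neg hU, if_pos hMF]

lemma localNext_MS {G : SimpleGraph V} {m : V → Option V} {C : MMConfig V} {u : V}
    (hmu : m u ≠ none) (hU : ¬ guardUpdate G m C u) (hMF : ¬ guardMatchFirst m C u)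
    (hMS : guardMatchSecond m C u) :
    localNext G m C u = ⟨askSecond m C u, C.a u, C.b u,
      pb (∃ v, m u = some v ∧ msE m C u v), pb (∃ v, m u = some v ∧ msE m C u v)⟩ := by
  unfold localNext
  rw [if_neg hmu, if_neg hU, if_neg hMF, if_pos hMS]

lemma next_true {G : SimpleGraph V} {m : V → Option V} {C : MMConfig V} {u v : V}
    (huv : m u = some v) (hA : Activable G m C u) (he : (localNext G m C u).e = true) :
    (¬ guardUpdate G m C u ∧ guardMatchFirst m C u ∧ mfE m C u v) ∨
    (¬ guardUpdate G m C u ∧ ¬ guardMatchFirst m C u ∧ guardMatchSecond m C u ∧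
      msE m C u v ∧ C.s v = true) := by
  have hmu : m u ≠ none := by rw [huv]; exact Option.some_ne_none v
  unfold localNext at he
  rw [if_neg hmu] at he
  by_cases hU : guardUpdate G m C u
  · rw [if_pos hU] at he; simp at he
  rw [if_neg hU] at he
  by_cases hMF : guardMatchFirst m C u
  · rw [if_pos hMF] at he
    left
    refine ⟨hU, hMF, ?_⟩
    obtain ⟨v', hv', hE⟩ := pb_true.mp he
    rw [huv] at hv'
    obtain rfl : v' = v := (Option.some_inj.mp hv').symm
    exact hE
  rw [if_neg hMF] at he
  by_cases hMS : guardMatchSecond m C u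
  · rw [if_pos hMS] at he
    right
    refine ⟨hU, hMF, hMS, ?_, ?_⟩
    · obtain ⟨v', hv', hE⟩ := pb_true.mp he
      rw [huv] at hv'
      obtain rfl : v' = v := (Option.some_inj.mp hv').symm
      exact hE
    · obtain ⟨-, v', hv', hs, -⟩ := hMS
      rw [huv] at hv'
      obtain rfl : v' = v := (Option.some_inj.mp hv').symm
      exact hs
  rw [if_neg hMS] at he
  by_cases hR : guardResetMatch m C u
  · rw [if_pos hR] at he; simp at he
  rw [if_neg hR] at he
  rcases hA with ⟨h, -⟩ | ⟨-, h | h | h | h⟩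
  · exact absurd h hmu
  · exact absurd h hU
  · exact absurd h hMF
  · exact absurd h hMS
  · exact absurd h hR

lemma next_ab {G : SimpleGraph V} {m : V → Option V} {C : MMConfig V} {v : V}
    (hmv : m v ≠ none)
    (hse : (localNext G m C v).s = true ∨ (localNext G m C v).e = true) :
    (localNext G m C v).a = C.a v ∧ (localNext G m C v).b = C.b v := by
  unfold localNext at hse ⊢
  rw [if_neg hmv] at hse ⊢
  by_cases hU : guardUpdate G m C v
  · rw [if_pos hU] at hse; simp at hse
  rw [if_neg hU] at hse ⊢
  split_ifs <;> exact ⟨rfl, rfl⟩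

lemma next_se {G : SimpleGraph V} {m : V → Option V} {C : MMConfig V} {u v : V}
    (hvu : m v = some u) (hA : Activable G m C v)
    (he : (localNext G m C v).e = true) : (localNext G m C v).s = true := by
  have hmv : m v ≠ none := by rw [hvu]; exact Option.some_ne_none u
  rcases next_true hvu hA he with ⟨hU, hMF, hE⟩ | ⟨hU, hMF, hMS, hE, -⟩
  · rw [localNext_MF hmv hU hMF]
    exact pb_true.mpr ⟨u, hvu, mfE_mfS hE⟩
  · rw [localNext_MS hmv hU hMF hMS]
    exact pb_true.mpr ⟨u, hvu, hE⟩

lemma single_keep {G : SimpleGraph V} {m : V → Option V} {C : MMConfig V} {x u : V}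
    (hx : m x = none) (hpx : C.p x = some u) (hpu : C.p u = some x)
    (hadj : G.Adj x u) (hmu : m u ≠ none) : (localNext G m C x).p = C.p x := by
  unfold localNext
  rw [if_pos hx]
  have hre : ¬ guardResetEnd C x := by
    rintro ⟨h, -⟩
    rw [hpx] at h; exact Option.some_ne_none _ h
  have hup : ¬ guardUpdateP G m C x := by
    rintro (⟨h, -⟩ | ⟨w, hw, hnot⟩ | ⟨w, hw, hne⟩)
    · rw [hpx] at h; exact Option.some_ne_none _ h
    · rw [hpx] at hw
      rw [← Option.some_inj.mp hw] at hnot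
      exact hnot ⟨hadj, hmu⟩
    · rw [hpx] at hw
      rw [← Option.some_inj.mp hw] at hne
      exact hne hpu
  rw [if_neg hre, if_neg hup]
  split_ifs <;> rfl

end MaxMatchHelpers

/-- If a matched vertex `u` writes `True` into `end_u` in two distinct
transitions, then its partner `v` executes a rule strictly in between. -/
theorem stmt18 {V : Type*} [Fintype V] [LinearOrder V]
    (G : SimpleGraph V) (m : V → Option V) (hm : MaxMatchingOn G m)
    (E : MMExecution G m) (u v : V) (huv : m u = some v) (i j : ℕ) (hij : i < j)
    (hi : u ∈ E.act i ∧ (E.cfg (i + 1)).e u = true)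
    (hj : u ∈ E.act j ∧ (E.cfg (j + 1)).e u = true) :
    ∃ k, i < k ∧ k < j ∧ v ∈ E.act k := by
  classical
  by_contra hcon
  push_neg at hcon
  have hvu : m v = some u := hm.symm u v huv
  have hmu : m u ≠ none := by rw [huv]; exact Option.some_ne_none v
  have hmv : m v ≠ none := by rw [hvu]; exact Option.some_ne_none u
  have hstep : ∀ (k : ℕ) (w : V), w ∈ E.act k →
      (E.cfg (k+1)).loc w = localNext G m (E.cfg k) w ∧ Activable G m (E.cfg k) w := by
    intro k w hw
    rcases E.valid k with ⟨-, hact, hnext, -⟩ | ⟨hemp, -, -⟩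
    · exact ⟨hnext w hw, hact w hw⟩
    · rw [hemp] at hw; exact absurd hw (Set.notMem_empty w)
  have hkeep : ∀ (k : ℕ) (w : V), w ∉ E.act k → (E.cfg (k+1)).loc w = (E.cfg k).loc w := by
    intro k w hw
    rcases E.valid k with ⟨-, -, -, hfr⟩ | ⟨-, -, heq⟩
    · exact hfr w hw
    · rw [heq]
  have hfrz : ∀ k, i + 1 ≤ k → k ≤ j → (E.cfg k).loc v = (E.cfg (i+1)).loc v := by
    intro k hk1
    induction k, hk1 using Nat.le_induction with
    | base => intro _; rfl
    | succ n hn ih =>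
      intro hnj
      have h1 : (E.cfg (n+1)).loc v = (E.cfg n).loc v :=
        hkeep n v (hcon n (by omega) (by omega))
      rw [h1, ih (by omega)]
  obtain ⟨hactj, hej⟩ := hj
  obtain ⟨hlocj, hAj⟩ := hstep j u hactj
  have hej' : (localNext G m (E.cfg j) u).e = true := by
    have h1 : (E.cfg (j+1)).e u = (localNext G m (E.cfg j) u).e := congrArg MMLocal.e hlocj
    rw [← h1]; exact hej
  have hcasej := next_true huv hAj hej'
  obtain ⟨hacti, hei⟩ := hi
  obtain ⟨hloci, hAi⟩ := hstep i u hacti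
  have hei' : (localNext G m (E.cfg i) u).e = true := by
    have h1 : (E.cfg (i+1)).e u = (localNext G m (E.cfg i) u).e := congrArg MMLocal.e hloci
    rw [← h1]; exact hei
  have hsevj : (E.cfg j).s v = true ∨ (E.cfg j).e v = true := by
    rcases hcasej with ⟨-, -, hEj⟩ | ⟨-, -, -, -, hsvj⟩
    · exact Or.inr hEj.2.2.2.2
    · exact Or.inl hsvj
  have hse1 : (E.cfg (i+1)).s v = true ∨ (E.cfg (i+1)).e v = true := by
    have h := hfrz j (by omega) le_rfl
    rcases hsevj with h' | h'
    · exact Or.inl ((congrArg MMLocal.s h).symm.trans h')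
    · exact Or.inr ((congrArg MMLocal.e h).symm.trans h')
  have hvab : (E.cfg (i+1)).a v = (E.cfg i).a v ∧ (E.cfg (i+1)).b v = (E.cfg i).b v := by
    by_cases hva : v ∈ E.act i
    · obtain ⟨hlv, hAv⟩ := hstep i v hva
      have hse' : (localNext G m (E.cfg i) v).s = true ∨
          (localNext G m (E.cfg i) v).e = true := by
        rcases hse1 with h | h
        · exact Or.inl (((congrArg MMLocal.s hlv).symm).trans h)
        · exact Or.inr (((congrArg MMLocal.e hlv).symm).trans h)
      obtain ⟨ha, hb⟩ := next_ab hmv hse'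
      exact ⟨(congrArg MMLocal.a hlv).trans ha, (congrArg MMLocal.b hlv).trans hb⟩
    · have h := hkeep i v hva
      exact ⟨congrArg MMLocal.a h, congrArg MMLocal.b h⟩
  have hQ : ∀ k, i+1 ≤ k → k ≤ j →
      (E.cfg k).a v = (E.cfg i).a v ∧ (E.cfg k).b v = (E.cfg i).b v ∧
      (E.cfg k).p v = (E.cfg (i+1)).p v ∧ (E.cfg k).s v = (E.cfg (i+1)).s v ∧
      (E.cfg k).e v = (E.cfg (i+1)).e v := by
    intro k h1 h2
    have h := hfrz k h1 h2
    exact ⟨(congrArg MMLocal.a h).trans hvab.1, (congrArg MMLocal.b h).trans hvab.2,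
      congrArg MMLocal.p h, congrArg MMLocal.s h, congrArg MMLocal.e h⟩
  rcases next_true huv hAi hei' with ⟨hUi, hMFi, hEi⟩ | ⟨hUi, hMFi, hMSi, hEi, hsvi⟩
  · -- Case: MatchFirst wrote true at step i
    obtain ⟨x, hpx, hxp⟩ := hEi.2.1
    have haskFi : askFirst m (E.cfg i) u = some x := by rw [← hEi.1, hpx]
    have hA' : ¬ guardUpdateA G m (E.cfg i) u := fun h => hUi (Or.inl h)
    have hinS : inSNopt G m u ((E.cfg i).p u) := by
      by_contra hc; exact hA' (Or.inr (Or.inr (Or.inr hc)))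
    obtain ⟨hadj, hxs⟩ : G.Adj u x ∧ m x = none := by
      rcases hinS with h | ⟨w, hw, h1, h2⟩
      · rw [hpx] at h; exact absurd h (Option.some_ne_none x)
      · rw [hpx] at hw
        obtain rfl : x = w := Option.some_inj.mp hw
        exact ⟨h1, h2⟩
    have hadj' : G.Adj x u := hadj.symm
    have hLNi := localNext_MF hmu hUi hMFi
    have hbp : (E.cfg (i+1)).p u = some x := by
      have h1 : (E.cfg (i+1)).p u = (localNext G m (E.cfg i) u).p := congrArg MMLocal.p hloci
      rw [h1, hLNi]; exact haskFi
    have hba : (E.cfg (i+1)).a u = (E.cfg i).a u := by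
      have h1 : (E.cfg (i+1)).a u = (localNext G m (E.cfg i) u).a := congrArg MMLocal.a hloci
      rw [h1, hLNi]
    have hbb : (E.cfg (i+1)).b u = (E.cfg i).b u := by
      have h1 : (E.cfg (i+1)).b u = (localNext G m (E.cfg i) u).b := congrArg MMLocal.b hloci
      rw [h1, hLNi]
    have hbs : (E.cfg (i+1)).s u = true := by
      have h1 : (E.cfg (i+1)).s u = (localNext G m (E.cfg i) u).s := congrArg MMLocal.s hloci
      rw [h1, hLNi]; exact pb_true.mpr ⟨v, huv, mfE_mfS hEi⟩
    have hbe : (E.cfg (i+1)).e u = true := by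
      have h1 : (E.cfg (i+1)).e u = (localNext G m (E.cfg i) u).e := congrArg MMLocal.e hloci
      rw [h1, hLNi]; exact pb_true.mpr ⟨v, huv, hEi⟩
    have hbx : (E.cfg (i+1)).p x = some u := by
      by_cases hxa : x ∈ E.act i
      · obtain ⟨hlx, -⟩ := hstep i x hxa
        have h1 : (E.cfg (i+1)).p x = (localNext G m (E.cfg i) x).p := congrArg MMLocal.p hlx
        rw [h1, single_keep hxs hxp hpx hadj' hmu]; exact hxp
      · exact (congrArg MMLocal.p (hkeep i x hxa)).trans hxp
    have hguard : ∀ n, i+1 ≤ n → n ≤ j →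
        (E.cfg n).p u = some x → (E.cfg n).p x = some u →
        (E.cfg n).a u = (E.cfg i).a u → (E.cfg n).b u = (E.cfg i).b u →
        askFirst m (E.cfg n) u = some x ∧
        ¬ guardUpdate G m (E.cfg n) u ∧ ¬ guardMatchSecond m (E.cfg n) u ∧
        ¬ guardResetMatch m (E.cfg n) u := by
      intro n hn1 hn2 hp hpxx ha hb
      obtain ⟨hqa, hqb, -, -, -⟩ := hQ n hn1 hn2
      have hask : askFirst m (E.cfg n) u = some x := by
        rw [askFirst_congr huv ha hb hqa hqb]; exact haskFi
      have haskne : askFirst m (E.cfg n) u ≠ none := by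
        rw [hask]; exact Option.some_ne_none x
      have hasksec := askSecond_eq_none huv hvu haskne
      refine ⟨hask, ?_, ?_, ?_⟩
      · rintro (hA | ⟨-, hP⟩)
        · exact hA' ((guardUpdateA_congr ha hb (hp.trans hpx.symm)).mp hA)
        · rcases hP with hnone | ⟨w, hw, hwp, -⟩
          · rw [hp] at hnone; exact Option.some_ne_none _ hnone
          · rw [hp] at hw
            rw [← Option.some_inj.mp hw] at hwp
            exact hwp hpxx
      · rintro ⟨h2, -⟩; exact h2 hasksec
      · rintro (⟨h1, -, -⟩ | ⟨h2, -, -⟩)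
        · exact haskne h1
        · exact h2 hasksec
    have hInv : ∀ k, i+1 ≤ k → k ≤ j →
        (E.cfg k).p u = some x ∧ (E.cfg k).p x = some u ∧
        (E.cfg k).a u = (E.cfg i).a u ∧ (E.cfg k).b u = (E.cfg i).b u := by
      intro k hk1
      induction k, hk1 using Nat.le_induction with
      | base => intro _; exact ⟨hbp, hbx, hba, hbb⟩
      | succ n hn ih =>
        intro hnj
        obtain ⟨ih1, ih2, ih3, ih4⟩ := ih (by omega)
        obtain ⟨hask, hU, hMS, hR⟩ := hguard n (by omega) (by omega) ih1 ih2 ih3 ih4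
        have hx' : (E.cfg (n+1)).p x = some u := by
          by_cases hxa : x ∈ E.act n
          · obtain ⟨hlx, -⟩ := hstep n x hxa
            have h1 : (E.cfg (n+1)).p x = (localNext G m (E.cfg n) x).p :=
              congrArg MMLocal.p hlx
            rw [h1, single_keep hxs ih2 ih1 hadj' hmu]; exact ih2
          · exact (congrArg MMLocal.p (hkeep n x hxa)).trans ih2
        by_cases hua : u ∈ E.act n
        · obtain ⟨hlu, hAu⟩ := hstep n u hua
          have hMF : guardMatchFirst m (E.cfg n) u := by
            rcases hAu with ⟨h, -⟩ | ⟨-, h | h | h | h⟩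
            · exact absurd h hmu
            · exact absurd h hU
            · exact h
            · exact absurd h hMS
            · exact absurd h hR
          have hLN := localNext_MF hmu hU hMF
          refine ⟨?_, hx', ?_, ?_⟩
          · have h1 : (E.cfg (n+1)).p u = (localNext G m (E.cfg n) u).p :=
              congrArg MMLocal.p hlu
            rw [h1, hLN]; exact hask
          · have h1 : (E.cfg (n+1)).a u = (localNext G m (E.cfg n) u).a :=
              congrArg MMLocal.a hlu
            rw [h1, hLN]; exact ih3
          · have h1 : (E.cfg (n+1)).b u = (localNext G m (E.cfg n) u).b :=
              congrArg MMLocal.b hlu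
            rw [h1, hLN]; exact ih4
        · have h := hkeep n u hua
          exact ⟨(congrArg MMLocal.p h).trans ih1, hx',
            (congrArg MMLocal.a h).trans ih3, (congrArg MMLocal.b h).trans ih4⟩
    obtain ⟨hIj1, hIj2, hIj3, hIj4⟩ := hInv j (by omega) le_rfl
    obtain ⟨haskj, hUj', hMSj', hRj'⟩ := hguard j (by omega) le_rfl hIj1 hIj2 hIj3 hIj4
    rcases hcasej with ⟨hUj, hMFj, hEj⟩ | ⟨-, -, hMSj, -, -⟩
    · have hpvs : ∀ n, i+1 ≤ n → n ≤ j →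
          (E.cfg n).p v = askSecond m (E.cfg n) v ∧ (E.cfg n).e v = true := by
        intro n hn1 hn2
        obtain ⟨hqa, hqb, hqp, -, hqe⟩ := hQ n hn1 hn2
        obtain ⟨hqa', hqb', hqp', -, hqe'⟩ := hQ j (by omega) le_rfl
        obtain ⟨-, -, hIn3, hIn4⟩ := hInv n hn1 hn2
        constructor
        · rw [hqp, ← hqp', hEj.2.2.2.1,
            askSecond_congr hvu huv (hqa'.trans hqa.symm) (hqb'.trans hqb.symm)
              (hIj3.trans hIn3.symm) (hIj4.trans hIn4.symm)]
        · rw [hqe, ← hqe']; exact hEj.2.2.2.2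
      have hSE : ∀ k, i+1 ≤ k → k ≤ j → (E.cfg k).s u = true ∧ (E.cfg k).e u = true := by
        intro k hk1
        induction k, hk1 using Nat.le_induction with
        | base => intro _; exact ⟨hbs, hbe⟩
        | succ n hn ih =>
          intro hnj
          obtain ⟨ihs, ihe⟩ := ih (by omega)
          obtain ⟨ih1, ih2, ih3, ih4⟩ := hInv n (by omega) (by omega)
          obtain ⟨hask, hU, hMS, hR⟩ := hguard n (by omega) (by omega) ih1 ih2 ih3 ih4
          obtain ⟨hpv, hev⟩ := hpvs n (by omega) (by omega)
          by_cases hua : u ∈ E.act n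
          · obtain ⟨hlu, hAu⟩ := hstep n u hua
            have hMF : guardMatchFirst m (E.cfg n) u := by
              rcases hAu with ⟨h, -⟩ | ⟨-, h | h | h | h⟩
              · exact absurd h hmu
              · exact absurd h hU
              · exact h
              · exact absurd h hMS
              · exact absurd h hR
            have hLN := localNext_MF hmu hU hMF
            have hmfE : mfE m (E.cfg n) u v :=
              ⟨ih1.trans hask.symm, ⟨x, ih1, ih2⟩, ihs, hpv, hev⟩
            constructor
            · have h1 : (E.cfg (n+1)).s u = (localNext G m (E.cfg n) u).s :=
                congrArg MMLocal.s hlu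
              rw [h1, hLN]; exact pb_true.mpr ⟨v, huv, mfE_mfS hmfE⟩
            · have h1 : (E.cfg (n+1)).e u = (localNext G m (E.cfg n) u).e :=
                congrArg MMLocal.e hlu
              rw [h1, hLN]; exact pb_true.mpr ⟨v, huv, hmfE⟩
          · have h := hkeep n u hua
            exact ⟨(congrArg MMLocal.s h).trans ihs, (congrArg MMLocal.e h).trans ihe⟩
      obtain ⟨hsj, hej2⟩ := hSE j (by omega) le_rfl
      obtain ⟨-, v', hv', hd⟩ := hMFj
      rw [huv] at hv'
      obtain rfl : v' = v := (Option.some_inj.mp hv').symm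
      rcases hd with h | h | h
      · exact h hEj.1
      · exact h ⟨fun _ => mfE_mfS hEj, fun _ => hsj⟩
      · exact h ⟨fun _ => hEj, fun _ => hej2⟩
    · exact hMSj' hMSj
  · -- Case: MatchSecond wrote true at step i
    obtain ⟨x, hpx, hxp⟩ := hEi.2.1
    have haskSi : askSecond m (E.cfg i) u = some x := by rw [← hEi.1, hpx]
    have haskFnone : askFirst m (E.cfg i) u = none := by
      by_contra h
      rw [askSecond_eq_none huv hvu h] at haskSi
      exact Option.some_ne_none _ haskSi.symm
    have hA' : ¬ guardUpdateA G m (E.cfg i) u := fun h => hUi (Or.inl h)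
    have hinS : inSNopt G m u ((E.cfg i).p u) := by
      by_contra hc; exact hA' (Or.inr (Or.inr (Or.inr hc)))
    obtain ⟨hadj, hxs⟩ : G.Adj u x ∧ m x = none := by
      rcases hinS with h | ⟨w, hw, h1, h2⟩
      · rw [hpx] at h; exact absurd h (Option.some_ne_none x)
      · rw [hpx] at hw
        obtain rfl : x = w := Option.some_inj.mp hw
        exact ⟨h1, h2⟩
    have hadj' : G.Adj x u := hadj.symm
    have hsv1 : (E.cfg (i+1)).s v = true := by
      rcases hcasej with ⟨-, -, hEj⟩ | ⟨-, -, -, -, hsvj⟩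
      · have hev1 : (E.cfg (i+1)).e v = true := by
          have h := hfrz j (by omega) le_rfl
          exact (congrArg MMLocal.e h).symm.trans hEj.2.2.2.2
        by_cases hva : v ∈ E.act i
        · obtain ⟨hlv, hAv⟩ := hstep i v hva
          have he' : (localNext G m (E.cfg i) v).e = true :=
            ((congrArg MMLocal.e hlv).symm).trans hev1
          exact (congrArg MMLocal.s hlv).trans (next_se hvu hAv he')
        · exact (congrArg MMLocal.s (hkeep i v hva)).trans hsvi
      · have h := hfrz j (by omega) le_rfl
        exact (congrArg MMLocal.s h).symm.trans hsvj
    have hLNi := localNext_MS hmu hUi hMFi hMSi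
    have hbp : (E.cfg (i+1)).p u = some x := by
      have h1 : (E.cfg (i+1)).p u = (localNext G m (E.cfg i) u).p := congrArg MMLocal.p hloci
      rw [h1, hLNi]; exact haskSi
    have hba : (E.cfg (i+1)).a u = (E.cfg i).a u := by
      have h1 : (E.cfg (i+1)).a u = (localNext G m (E.cfg i) u).a := congrArg MMLocal.a hloci
      rw [h1, hLNi]
    have hbb : (E.cfg (i+1)).b u = (E.cfg i).b u := by
      have h1 : (E.cfg (i+1)).b u = (localNext G m (E.cfg i) u).b := congrArg MMLocal.b hloci
      rw [h1, hLNi]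
    have hbs : (E.cfg (i+1)).s u = true := by
      have h1 : (E.cfg (i+1)).s u = (localNext G m (E.cfg i) u).s := congrArg MMLocal.s hloci
      rw [h1, hLNi]; exact pb_true.mpr ⟨v, huv, hEi⟩
    have hbe : (E.cfg (i+1)).e u = true := by
      have h1 : (E.cfg (i+1)).e u = (localNext G m (E.cfg i) u).e := congrArg MMLocal.e hloci
      rw [h1, hLNi]; exact pb_true.mpr ⟨v, huv, hEi⟩
    have hbx : (E.cfg (i+1)).p x = some u := by
      by_cases hxa : x ∈ E.act i
      · obtain ⟨hlx, -⟩ := hstep i x hxa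
        have h1 : (E.cfg (i+1)).p x = (localNext G m (E.cfg i) x).p := congrArg MMLocal.p hlx
        rw [h1, single_keep hxs hxp hpx hadj' hmu]; exact hxp
      · exact (congrArg MMLocal.p (hkeep i x hxa)).trans hxp
    have hguard : ∀ n, i+1 ≤ n → n ≤ j →
        (E.cfg n).p u = some x → (E.cfg n).p x = some u →
        (E.cfg n).a u = (E.cfg i).a u → (E.cfg n).b u = (E.cfg i).b u →
        askSecond m (E.cfg n) u = some x ∧ askFirst m (E.cfg n) u = none ∧
        ¬ guardUpdate G m (E.cfg n) u ∧ ¬ guardMatchFirst m (E.cfg n) u ∧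
        ¬ guardResetMatch m (E.cfg n) u := by
      intro n hn1 hn2 hp hpxx ha hb
      obtain ⟨hqa, hqb, -, hqs, -⟩ := hQ n hn1 hn2
      have hask : askSecond m (E.cfg n) u = some x := by
        rw [askSecond_congr huv hvu ha hb hqa hqb]; exact haskSi
      have haskF : askFirst m (E.cfg n) u = none := by
        rw [askFirst_congr huv ha hb hqa hqb]; exact haskFnone
      have hsvn : (E.cfg n).s v = true := hqs.trans hsv1
      refine ⟨hask, haskF, ?_, ?_, ?_⟩
      · rintro (hA | ⟨-, hP⟩)
        · exact hA' ((guardUpdateA_congr ha hb (hp.trans hpx.symm)).mp hA)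
        · rcases hP with hnone | ⟨w, hw, hwp, -⟩
          · rw [hp] at hnone; exact Option.some_ne_none _ hnone
          · rw [hp] at hw
            rw [← Option.some_inj.mp hw] at hwp
            exact hwp hpxx
      · rintro ⟨h1, -⟩; exact h1 haskF
      · rintro (⟨-, h1, -⟩ | ⟨-, -, v', hv', hsv'⟩)
        · rw [hask] at h1; exact Option.some_ne_none _ h1
        · rw [huv] at hv'
          obtain rfl : v' = v := (Option.some_inj.mp hv').symm
          rw [hsvn] at hsv'
          exact Bool.noConfusion hsv'
    have hInv : ∀ k, i+1 ≤ k → k ≤ j →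
        (E.cfg k).p u = some x ∧ (E.cfg k).p x = some u ∧
        (E.cfg k).a u = (E.cfg i).a u ∧ (E.cfg k).b u = (E.cfg i).b u := by
      intro k hk1
      induction k, hk1 using Nat.le_induction with
      | base => intro _; exact ⟨hbp, hbx, hba, hbb⟩
      | succ n hn ih =>
        intro hnj
        obtain ⟨ih1, ih2, ih3, ih4⟩ := ih (by omega)
        obtain ⟨hask, haskF, hU, hMF, hR⟩ := hguard n (by omega) (by omega) ih1 ih2 ih3 ih4
        have hx' : (E.cfg (n+1)).p x = some u := by
          by_cases hxa : x ∈ E.act n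
          · obtain ⟨hlx, -⟩ := hstep n x hxa
            have h1 : (E.cfg (n+1)).p x = (localNext G m (E.cfg n) x).p :=
              congrArg MMLocal.p hlx
            rw [h1, single_keep hxs ih2 ih1 hadj' hmu]; exact ih2
          · exact (congrArg MMLocal.p (hkeep n x hxa)).trans ih2
        by_cases hua : u ∈ E.act n
        · obtain ⟨hlu, hAu⟩ := hstep n u hua
          have hMS : guardMatchSecond m (E.cfg n) u := by
            rcases hAu with ⟨h, -⟩ | ⟨-, h | h | h | h⟩
            · exact absurd h hmu
            · exact absurd h hU
            · exact absurd h hMF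
            · exact h
            · exact absurd h hR
          have hLN := localNext_MS hmu hU hMF hMS
          refine ⟨?_, hx', ?_, ?_⟩
          · have h1 : (E.cfg (n+1)).p u = (localNext G m (E.cfg n) u).p :=
              congrArg MMLocal.p hlu
            rw [h1, hLN]; exact hask
          · have h1 : (E.cfg (n+1)).a u = (localNext G m (E.cfg n) u).a :=
              congrArg MMLocal.a hlu
            rw [h1, hLN]; exact ih3
          · have h1 : (E.cfg (n+1)).b u = (localNext G m (E.cfg n) u).b :=
              congrArg MMLocal.b hlu
            rw [h1, hLN]; exact ih4
        · have h := hkeep n u hua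
          exact ⟨(congrArg MMLocal.p h).trans ih1, hx',
            (congrArg MMLocal.a h).trans ih3, (congrArg MMLocal.b h).trans ih4⟩
    obtain ⟨hIj1, hIj2, hIj3, hIj4⟩ := hInv j (by omega) le_rfl
    obtain ⟨haskj, haskFj, hUj', hMFj', hRj'⟩ :=
      hguard j (by omega) le_rfl hIj1 hIj2 hIj3 hIj4
    rcases hcasej with ⟨-, hMFj, -⟩ | ⟨hUj, hMFj2, hMSj, hEj, hsvj⟩
    · exact hMFj' hMFj
    · have hpvs : ∀ n, i+1 ≤ n → n ≤ j → (E.cfg n).p v = askFirst m (E.cfg n) v := by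
        intro n hn1 hn2
        obtain ⟨hqa, hqb, hqp, -, -⟩ := hQ n hn1 hn2
        obtain ⟨hqa', hqb', hqp', -, -⟩ := hQ j (by omega) le_rfl
        obtain ⟨-, -, hIn3, hIn4⟩ := hInv n hn1 hn2
        rw [hqp, ← hqp', hEj.2.2,
          askFirst_congr hvu (hqa'.trans hqa.symm) (hqb'.trans hqb.symm)
            (hIj3.trans hIn3.symm) (hIj4.trans hIn4.symm)]
      have hSE : ∀ k, i+1 ≤ k → k ≤ j → (E.cfg k).s u = true ∧ (E.cfg k).e u = true := by
        intro k hk1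
        induction k, hk1 using Nat.le_induction with
        | base => intro _; exact ⟨hbs, hbe⟩
        | succ n hn ih =>
          intro hnj
          obtain ⟨ihs, ihe⟩ := ih (by omega)
          obtain ⟨ih1, ih2, ih3, ih4⟩ := hInv n (by omega) (by omega)
          obtain ⟨hask, haskF, hU, hMF, hR⟩ :=
            hguard n (by omega) (by omega) ih1 ih2 ih3 ih4
          by_cases hua : u ∈ E.act n
          · obtain ⟨hlu, hAu⟩ := hstep n u hua
            have hMS : guardMatchSecond m (E.cfg n) u := by
              rcases hAu with ⟨h, -⟩ | ⟨-, h | h | h | h⟩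
              · exact absurd h hmu
              · exact absurd h hU
              · exact absurd h hMF
              · exact h
              · exact absurd h hR
            have hLN := localNext_MS hmu hU hMF hMS
            have hmsE : msE m (E.cfg n) u v :=
              ⟨ih1.trans hask.symm, ⟨x, ih1, ih2⟩, hpvs n (by omega) (by omega)⟩
            constructor
            · have h1 : (E.cfg (n+1)).s u = (localNext G m (E.cfg n) u).s :=
                congrArg MMLocal.s hlu
              rw [h1, hLN]; exact pb_true.mpr ⟨v, huv, hmsE⟩
            · have h1 : (E.cfg (n+1)).e u = (localNext G m (E.cfg n) u).e :=
                congrArg MMLocal.e hlu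
              rw [h1, hLN]; exact pb_true.mpr ⟨v, huv, hmsE⟩
          · have h := hkeep n u hua
            exact ⟨(congrArg MMLocal.s h).trans ihs, (congrArg MMLocal.e h).trans ihe⟩
      obtain ⟨hsj, hej2⟩ := hSE j (by omega) le_rfl
      obtain ⟨-, v', hv', hsv'2, hd⟩ := hMSj
      rw [huv] at hv'
      obtain rfl : v' = v := (Option.some_inj.mp hv').symm
      rcases hd with h | h | h
      · exact h hEj.1
      · exact h ⟨fun _ => hEj, fun _ => hej2⟩
      · exact h (hsj.trans hej2.symm)
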